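/- arXiv:1912.04685 — 6 statements merged into one kernel-verified Lean document; each statement's English description precedes it below -/
import Mathlib

section
/- Let 𝒳 be a countable set and let f : 𝒳 ⇀ 𝒳 and G : 𝒳 ⇀ ℝ be partial functions with the same domain of definition dom f. Suppose that for every finitely supported probability distribution p on 𝒳 with supp p ⊆ dom f one has ∑_x p(x)G(x) + S(f_*p) − S(p) ≥ 0. Then for every y ∈ img f, ∑_{x : f(x)=y} e^{−G(x)} ≤ 1. -/
open scoped ENNReal

/-- Shannon entropy (in nats) of a distribution `p` on a countable set,
as a real number (used for finitely supported distributions). -/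
noncomputable def entropyR {X : Type*} (p : X → ℝ) : ℝ :=
  -∑' x, p x * Real.log (p x)

/-- Pushforward of a distribution `p` along a map `f`:
`(f_*p)(y) = ∑_{x : f(x)=y} p(x)`. -/
noncomputable def pushforward {X : Type*} (f : X → X) (p : X → ℝ) : X → ℝ :=
  fun y => ∑' x, Set.indicator {x | f x = y} p x

/-- Proposition 1 of the paper, implication (condition 1 ⇒ condition 2):
if for every finitely supported probability distribution `p` supported in the
domain `D` one has `∑_x p(x) G(x) + S(f_*p) − S(p) ≥ 0`, then for every
`y` in the image of `f` one has `∑_{x ∈ D : f(x)=y} e^{−G(x)} ≤ 1`. -/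
theorem stmt0 {X : Type*} [Countable X] (D : Set X) (f : X → X) (G : X → ℝ)
    (h : ∀ p : X → ℝ, (∀ x, 0 ≤ p x) → HasSum p 1 → (Function.support p).Finite →
      Function.support p ⊆ D →
      0 ≤ (∑' x, p x * G x) + entropyR (pushforward f p) - entropyR p) :
    ∀ y ∈ f '' D,
      (∑' x, Set.indicator {x | x ∈ D ∧ f x = y}
        (fun x => ENNReal.ofReal (Real.exp (-G x))) x) ≤ 1 := by
  classical
  intro y _hy
  rw [ENNReal.tsum_eq_iSup_sum]
  apply iSup_le
  intro s
  rw [Finset.sum_indicator_eq_sum_filter]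
  set F : Finset X := s.filter (fun x => x ∈ {x | x ∈ D ∧ f x = y}) with hF
  have hFmem : ∀ x ∈ F, x ∈ D ∧ f x = y := by
    intro x hx
    have := Finset.mem_filter.mp hx
    exact this.2
  by_cases hFe : F = ∅
  · simp [hFe]
  have hFne : F.Nonempty := Finset.nonempty_of_ne_empty hFe
  set Z : ℝ := ∑ x ∈ F, Real.exp (-G x) with hZ
  have hZpos : 0 < Z := Finset.sum_pos (fun x _ => Real.exp_pos _) hFne
  set p : X → ℝ := fun x => if x ∈ F then Real.exp (-G x) / Z else 0 with hp
  have hp0 : ∀ x, 0 ≤ p x := by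
    intro x
    simp only [hp]
    split
    · positivity
    · exact le_refl 0
  have hpvanish : ∀ x ∉ F, p x = 0 := by
    intro x hx; simp [hp, hx]
  have hpF : ∀ x ∈ F, p x = Real.exp (-G x) / Z := by
    intro x hx; simp [hp, hx]
  have hpsum_eq : ∑ x ∈ F, p x = 1 := by
    rw [Finset.sum_congr rfl hpF, ← Finset.sum_div, ← hZ, div_self hZpos.ne']
  have hpsum : HasSum p 1 := by
    have : HasSum p (∑ x ∈ F, p x) := hasSum_sum_of_ne_finset_zero hpvanish
    rwa [hpsum_eq] at this
  have hsupp : Function.support p ⊆ (F : Set X) := by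
    intro x hx
    by_contra hc
    exact hx (hpvanish x hc)
  have hsuppfin : (Function.support p).Finite := Set.Finite.subset F.finite_toSet hsupp
  have hsuppD : Function.support p ⊆ D := by
    intro x hx
    exact (hFmem x (hsupp hx)).1
  have key := h p hp0 hpsum hsuppfin hsuppD
  -- pushforward is a point mass at y
  have hpush : ∀ y', pushforward f p y' = if y = y' then 1 else 0 := by
    intro y'
    unfold pushforward
    have hvan : ∀ x ∉ F, Set.indicator {x | f x = y'} p x = 0 := by
      intro x hx
      exact Set.indicator_apply_eq_zero.mpr (fun _ => hpvanish x hx)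
    rw [tsum_eq_sum hvan]
    by_cases hyy : y = y'
    · subst hyy
      rw [if_pos rfl, ← hpsum_eq]
      apply Finset.sum_congr rfl
      intro x hx
      rw [Set.indicator_apply_eq_self.mpr]
      intro hc
      exact absurd ((hFmem x hx).2) hc
    · rw [Finset.sum_eq_zero, if_neg hyy]
      intro x hx
      apply Set.indicator_apply_eq_zero.mpr
      intro hc
      exact absurd (((hFmem x hx).2).symm.trans hc) hyy
  have hpushent : entropyR (pushforward f p) = 0 := by
    unfold entropyR
    have : (fun y' => pushforward f p y' * Real.log (pushforward f p y')) = fun _ => 0 := by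
      funext y'
      rw [hpush y']
      split <;> simp
    rw [this, tsum_zero, neg_zero]
  -- entropy of p
  have hlogp : ∀ x ∈ F, Real.log (p x) = -G x - Real.log Z := by
    intro x hx
    rw [hpF x hx, Real.log_div (Real.exp_ne_zero _) hZpos.ne', Real.log_exp]
  have hentp : entropyR p = -∑ x ∈ F, p x * (-G x - Real.log Z) := by
    unfold entropyR
    rw [tsum_eq_sum (s := F) (fun x hx => by rw [hpvanish x hx, zero_mul])]
    congr 1
    exact Finset.sum_congr rfl (fun x hx => by rw [hlogp x hx])
  have hsumG : (∑' x, p x * G x) = ∑ x ∈ F, p x * G x := by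
    exact tsum_eq_sum (fun x hx => by rw [hpvanish x hx, zero_mul])
  rw [hsumG, hpushent, hentp] at key
  have key2 : 0 ≤ -Real.log Z := by
    have : (∑ x ∈ F, p x * G x) + 0 - -∑ x ∈ F, p x * (-G x - Real.log Z)
        = -Real.log Z := by
      rw [add_zero, sub_neg_eq_add, ← Finset.sum_add_distrib]
      have : ∀ x ∈ F, p x * G x + p x * (-G x - Real.log Z) = p x * (-Real.log Z) := by
        intro x hx; ring
      rw [Finset.sum_congr rfl this, ← Finset.sum_mul, hpsum_eq, one_mul]
    rwa [this] at key
  have hZle1 : Z ≤ 1 := by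
    have hlog : Real.log Z ≤ 0 := by linarith
    calc Z = Real.exp (Real.log Z) := (Real.exp_log hZpos).symm
    _ ≤ Real.exp 0 := Real.exp_le_exp.mpr hlog
    _ = 1 := Real.exp_zero
  calc (∑ x ∈ F, ENNReal.ofReal (Real.exp (-G x)))
      = ENNReal.ofReal Z := by
        rw [hZ, ENNReal.ofReal_sum_of_nonneg (fun x _ => (Real.exp_pos _).le)]
    _ ≤ ENNReal.ofReal 1 := ENNReal.ofReal_le_ofReal hZle1
    _ = 1 := ENNReal.ofReal_one
end

section
/- Let 𝒳 be a countable set and let f : 𝒳 ⇀ 𝒳 and G : 𝒳 ⇀ ℝ be partial functions with the same domain of definition dom f, and suppose that for every y ∈ img f, ∑_{x : f(x)=y} e^{−G(x)} ≤ 1 (in particular G(x) ≥ 0 for all x ∈ dom f). Then for every probability distribution p on 𝒳 with supp p ⊆ dom f and finite Shannon entropy S(p) < ∞, one has ∑_x p(x)G(x) ≥ S(p) − S(f_*p), where the left-hand sum is taken in [0,∞]. -/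
open scoped ENNReal

/-- Shannon entropy (in nats) of a distribution `p` on a countable set,
with value in `[0,∞]`. -/
noncomputable def entropyE {X : Type*} (p : X → ℝ) : ℝ≥0∞ :=
  ∑' x, ENNReal.ofReal (-(p x * Real.log (p x)))

/-- Grouping a tsum in `ℝ≥0∞` by the fibers of `f`. -/
lemma tsum_group {X : Type*} (f : X → X) (g : X → ℝ≥0∞) :
    ∑' x, g x = ∑' y, ∑' x, ({x | f x = y}).indicator g x := by
  rw [ENNReal.tsum_comm]
  refine (tsum_congr fun x => ?_).symm
  rw [tsum_eq_single (f x) (by intro y hy; simp [Set.indicator_apply, Ne.symm hy])]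
  simp [Set.indicator_apply]

/-- Proposition 1 of the paper, implication (condition 2 ⇒ condition 1):
if `∑_{x ∈ D : f(x)=y} e^{−G(x)} ≤ 1` for every `y` in the image of `f`
(in particular `G ≥ 0` on the domain `D`), then every probability
distribution `p` supported in `D` with finite Shannon entropy satisfies
`∑_x p(x) G(x) ≥ S(p) − S(f_*p)`, the left-hand sum taken in `[0,∞]`. -/
theorem stmt1 {X : Type*} [Countable X] (D : Set X) (f : X → X) (G : X → ℝ)
    (hG0 : ∀ x ∈ D, 0 ≤ G x)
    (hZ : ∀ y ∈ f '' D,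
      (∑' x, Set.indicator {x | x ∈ D ∧ f x = y}
        (fun x => ENNReal.ofReal (Real.exp (-G x))) x) ≤ 1) :
    ∀ p : X → ℝ, (∀ x, 0 ≤ p x) → HasSum p 1 → Function.support p ⊆ D →
      entropyE p ≠ ⊤ →
      entropyE p - entropyE (pushforward f p) ≤ ∑' x, ENNReal.ofReal (p x * G x) := by
  classical
  intro p hp hsum hsupp _hfin
  have hps : Summable p := hsum.summable
  set q : X → ℝ := pushforward f p with hqdef
  have hqy : ∀ y, q y = ∑' x, Set.indicator {x | f x = y} p x := fun y => rfl
  have hind0 : ∀ y x, 0 ≤ Set.indicator {x | f x = y} p x :=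
    fun y x => Set.indicator_nonneg (fun a _ => hp a) x
  have hq0 : ∀ y, 0 ≤ q y := fun y => tsum_nonneg (hind0 y)
  have hq1 : ∀ y, q y ≤ 1 := by
    intro y
    have h := Summable.tsum_le_tsum (f := Set.indicator {x | f x = y} p) (g := p)
      (fun x => by by_cases hx : f x = y <;> simp [Set.indicator_apply, hx, hp x])
      (hps.indicator _) hps
    rwa [hsum.tsum_eq] at h
  have hqge : ∀ x, p x ≤ q (f x) := by
    intro x
    have h := Summable.le_tsum (hps.indicator {z | f z = f x}) x (fun j _ => hind0 (f x) j)
    simpa [Set.indicator_apply, hqy] using h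
  have hp1 : ∀ x, p x ≤ 1 := fun x => by
    have := Summable.le_tsum hps x (fun j _ => hp j); rwa [hsum.tsum_eq] at this
  -- nonnegativity of summands
  have h1x : ∀ x, 0 ≤ -(p x * Real.log (p x)) := fun x =>
    neg_nonneg.2 (mul_nonpos_of_nonneg_of_nonpos (hp x) (Real.log_nonpos (hp x) (hp1 x)))
  have h2x : ∀ x, 0 ≤ p x * G x := by
    intro x
    rcases eq_or_lt_of_le (hp x) with h0 | h0
    · simp [← h0]
    · exact mul_nonneg h0.le (hG0 x (hsupp h0.ne'))
  have h3x : ∀ x, 0 ≤ p x * -Real.log (q (f x)) :=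
    fun x => mul_nonneg (hp x) (neg_nonneg.2 (Real.log_nonpos (hq0 _) (hq1 _)))
  set r : X → ℝ := fun x => if x ∈ D then q (f x) * Real.exp (-G x) else 0 with hrdef
  have h4x : ∀ x, 0 ≤ r x := by
    intro x; simp only [hrdef]; split
    · exact mul_nonneg (hq0 _) (Real.exp_pos _).le
    · exact le_rfl
  -- key pointwise inequality
  have key : ∀ x, -(p x * Real.log (p x)) + p x
      ≤ p x * G x + p x * -Real.log (q (f x)) + r x := by
    intro x
    rcases eq_or_lt_of_le (hp x) with h0 | h0
    · simpa [← h0] using h4x x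
    · have hxD : x ∈ D := hsupp h0.ne'
      have hb : 0 < q (f x) := lt_of_lt_of_le h0 (hqge x)
      have hrx : r x = q (f x) * Real.exp (-G x) := if_pos hxD
      have hlog : Real.log ((q (f x) * Real.exp (-G x)) / p x)
          ≤ (q (f x) * Real.exp (-G x)) / p x - 1 :=
        Real.log_le_sub_one_of_pos (by positivity)
      rw [Real.log_div (by positivity) h0.ne', Real.log_mul hb.ne' (Real.exp_pos _).ne',
        Real.log_exp] at hlog
      have h2 := mul_le_mul_of_nonneg_left hlog h0.le
      have hdiv : p x * ((q (f x) * Real.exp (-G x)) / p x) = q (f x) * Real.exp (-G x) := by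
        field_simp
      rw [hrx]
      nlinarith [h2, hdiv]
  -- ℝ≥0∞ machinery
  set P : X → ℝ≥0∞ := fun x => ENNReal.ofReal (p x) with hPdef
  set Q : X → ℝ≥0∞ := fun y => ENNReal.ofReal (q y) with hQdef
  have hQ : ∀ y, Q y = ∑' x, ({x | f x = y}).indicator P x := by
    intro y
    rw [hQdef]
    simp only [hqy y]
    rw [ENNReal.ofReal_tsum_of_nonneg (hind0 y) (hps.indicator _)]
    refine tsum_congr fun x => ?_
    by_cases hx : f x = y <;> simp [Set.indicator_apply, hx, hPdef]
  have hPsum : ∑' x, P x = 1 := by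
    rw [hPdef]
    simp only
    rw [← ENNReal.ofReal_tsum_of_nonneg hp hps, hsum.tsum_eq, ENNReal.ofReal_one]
  have hQsum : ∑' y, Q y = 1 := by
    rw [tsum_congr hQ, ← tsum_group f P, hPsum]
  -- step 2 : ∑ ofReal (r x) ≤ 1
  have hR : ∑' x, ENNReal.ofReal (r x) ≤ 1 := by
    rw [tsum_group f (fun x => ENNReal.ofReal (r x)), ← hQsum]
    refine ENNReal.tsum_le_tsum fun y => ?_
    have hrw : ∀ x, ({x | f x = y}).indicator (fun x => ENNReal.ofReal (r x)) x
        = Q y * ({x | x ∈ D ∧ f x = y}).indicator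
            (fun x => ENNReal.ofReal (Real.exp (-G x))) x := by
      intro x
      by_cases hxy : f x = y
      · subst hxy
        by_cases hxD : x ∈ D
        · rw [Set.indicator_of_mem (show x ∈ {x' | f x' = f x} from rfl),
            Set.indicator_of_mem (show x ∈ {x' | x' ∈ D ∧ f x' = f x} from ⟨hxD, rfl⟩), hrdef]
          simp only [hxD, if_true]
          exact ENNReal.ofReal_mul (hq0 (f x))
        · rw [Set.indicator_of_mem (show x ∈ {x' | f x' = f x} from rfl),
            Set.indicator_of_notMem (fun hx => hxD hx.1),
            mul_zero, hrdef]
          simp [hxD]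
      · rw [Set.indicator_of_notMem (show x ∉ {x' | f x' = y} from hxy),
          Set.indicator_of_notMem (show x ∉ {x' | x' ∈ D ∧ f x' = y} from fun hx => hxy hx.2),
          mul_zero]
    rw [tsum_congr hrw, ENNReal.tsum_mul_left]
    by_cases hy : y ∈ f '' D
    · calc Q y * _ ≤ Q y * 1 := mul_le_mul_right (hZ y hy) _
        _ = Q y := mul_one _
    · have hS : ∑' x, ({x | x ∈ D ∧ f x = y}).indicator
          (fun x => ENNReal.ofReal (Real.exp (-G x))) x = 0 := by
        refine ENNReal.summable.tsum_eq_zero_iff |>.2 fun x => ?_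
        have : x ∉ {x | x ∈ D ∧ f x = y} := fun hx => hy ⟨x, hx.1, hx.2⟩
        simp [Set.indicator_apply, this]
      rw [hS, mul_zero]
      exact zero_le
  -- step 3 : ∑ ofReal (p x * -log q (f x)) = entropyE q
  have hC : ∑' x, ENNReal.ofReal (p x * -Real.log (q (f x))) = entropyE q := by
    rw [tsum_group f (fun x => ENNReal.ofReal (p x * -Real.log (q (f x))))]
    refine tsum_congr fun y => ?_
    have hrw : ∀ x, ({x | f x = y}).indicator
          (fun x => ENNReal.ofReal (p x * -Real.log (q (f x)))) x
        = ({x | f x = y}).indicator P x * ENNReal.ofReal (-Real.log (q y)) := by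
      intro x
      by_cases hxy : f x = y
      · simp only [Set.indicator_apply, Set.mem_setOf_eq, hxy, if_true, hPdef]
        rw [← hxy]
        exact ENNReal.ofReal_mul (hp x)
      · simp [Set.indicator_apply, hxy]
    rw [tsum_congr hrw, ENNReal.tsum_mul_right, ← hQ y, hQdef]
    rw [← ENNReal.ofReal_mul (hq0 y)]
    congr 1
    ring
  -- step 1 : main summed inequality
  have step1 : entropyE p + 1
      ≤ (∑' x, ENNReal.ofReal (p x * G x))
        + (∑' x, ENNReal.ofReal (p x * -Real.log (q (f x))))
        + (∑' x, ENNReal.ofReal (r x)) := by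
    have lhs_eq : entropyE p + 1
        = ∑' x, (ENNReal.ofReal (-(p x * Real.log (p x))) + P x) := by
      rw [ENNReal.tsum_add, hPsum, entropyE]
    rw [lhs_eq, ← ENNReal.tsum_add, ← ENNReal.tsum_add]
    refine ENNReal.tsum_le_tsum fun x => ?_
    rw [hPdef]
    simp only
    rw [← ENNReal.ofReal_add (h1x x) (hp x), ← ENNReal.ofReal_add (h2x x) (h3x x),
      ← ENNReal.ofReal_add (add_nonneg (h2x x) (h3x x)) (h4x x)]
    exact ENNReal.ofReal_le_ofReal (key x)
  -- finish
  have hmain : entropyE p + 1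
      ≤ ((∑' x, ENNReal.ofReal (p x * G x)) + entropyE q) + 1 := by
    calc entropyE p + 1 ≤ _ := step1
      _ ≤ ((∑' x, ENNReal.ofReal (p x * G x)) + entropyE q) + 1 := by
        rw [hC]
        exact add_le_add_right hR _
  have hfinal : entropyE p ≤ (∑' x, ENNReal.ofReal (p x * G x)) + entropyE q :=
    (ENNReal.add_le_add_iff_right ENNReal.one_ne_top).1 hmain
  exact tsub_le_iff_right.2 hfinal
end

section
/- Let 𝒳 be a countable set and let f : 𝒳 ⇀ 𝒳 and G : 𝒳 ⇀ ℝ be partial functions with the same domain of definition dom f. Fix y ∈ img f and assume Z(y) := ∑_{x : f(x)=y} e^{−G(x)} is finite and positive and that ∑_{x : f(x)=y} e^{−G(x)} |G(x)| < ∞. Let w_y be the probability distribution on the fiber f^{-1}(y) given by w_y(x) = e^{−G(x)}/Z(y). Then the entropy production of w_y satisfies Σ(w_y) := S(f_*w_y) − S(w_y) + ∑_x w_y(x) G(x) = −ln Z(y). In particular, if the entropy-production inequality ∑_x p(x)G(x) + S(f_*p) − S(p) ≥ 0 holds for all distributions p supported in dom f, then −ln Z(y) ≥ 0 for all y ∈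 img f. -/
open scoped ENNReal

/-- The residual entropy production formula (eq. appres, Appendix B of the
paper): for `y ∈ img f` with `Z(y) = ∑_{x ∈ D : f(x)=y} e^{−G(x)}` finite and
positive and `∑_{x : f(x)=y} e^{−G(x)}|G(x)| < ∞`, the fiber Gibbs
distribution `w_y(x) = e^{−G(x)}/Z(y)` has entropy production
`Σ(w_y) = S(f_*w_y) − S(w_y) + ∑_x w_y(x)G(x) = −ln Z(y)`; in particular, if
the entropy-production inequality holds for all distributions supported in
the domain, then `−ln Z(y) ≥ 0`. -/
theorem stmt4 {X : Type*} [Countable X] (D : Set X) (f : X → X) (G : X → ℝ)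
    (y : X) (hy : y ∈ f '' D)
    (Zy : ℝ)
    (hZy : HasSum (Set.indicator {x | x ∈ D ∧ f x = y} (fun x => Real.exp (-G x))) Zy)
    (hZpos : 0 < Zy)
    (hGsum : Summable
      (Set.indicator {x | x ∈ D ∧ f x = y} (fun x => Real.exp (-G x) * |G x|)))
    (w : X → ℝ)
    (hwdef : w = Set.indicator {x | x ∈ D ∧ f x = y} (fun x => Real.exp (-G x) / Zy)) :
    ((entropyE (pushforward f w)).toReal - (entropyE w).toReal + (∑' x, w x * G x)
        = -Real.log Zy)
    ∧ ((∀ p : X → ℝ, (∀ x, 0 ≤ p x) → HasSum p 1 → (Function.support p).Finite →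
          Function.support p ⊆ D →
          0 ≤ (∑' x, p x * G x) + entropyR (pushforward f p) - entropyR p)
        → 0 ≤ -Real.log Zy) := by
  classical
  set A : Set X := {x | x ∈ D ∧ f x = y} with hA
  -- basic facts about w
  have hwnn : ∀ x, 0 ≤ w x := by
    intro x; rw [hwdef]
    by_cases hx : x ∈ A
    · rw [Set.indicator_of_mem hx]; positivity
    · rw [Set.indicator_of_notMem hx]
  have hweq : w = fun x => A.indicator (fun x => Real.exp (-G x)) x / Zy := by
    rw [hwdef]; funext x
    by_cases hx : x ∈ A
    · rw [Set.indicator_of_mem hx, Set.indicator_of_mem hx]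
    · rw [Set.indicator_of_notMem hx, Set.indicator_of_notMem hx, zero_div]
  have hw1 : HasSum w 1 := by
    rw [hweq]
    simpa [div_self hZpos.ne'] using hZy.div_const Zy
  have hwle : ∀ x, w x ≤ 1 := fun x => le_hasSum hw1 x (fun b _ => hwnn b)
  have hsupp : Function.support w ⊆ A := by
    rw [hwdef]; exact Set.support_indicator_subset
  -- pushforward of any distribution supported in the fiber is a delta at y
  have hpush_gen : ∀ q : X → ℝ, (∀ x, q x ≠ 0 → f x = y) → HasSum q 1 →
      pushforward f q = fun y' => if y' = y then 1 else 0 := by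
    intro q hq hq1
    funext y'
    unfold pushforward
    by_cases hy' : y' = y
    · have : Set.indicator {x | f x = y'} q = q := by
        apply Set.indicator_eq_self.mpr
        intro x hx
        rw [Function.mem_support] at hx
        show f x = y'
        rw [hq x hx, hy']
      rw [this, hq1.tsum_eq, if_pos hy']
    · rw [if_neg hy']
      have : Set.indicator {x | f x = y'} q = fun _ => 0 := by
        funext x
        by_cases hx : x ∈ {x | f x = y'}
        · rw [Set.indicator_of_mem hx]
          by_cases hq0 : q x = 0
          · exact hq0
          · exact absurd ((hx.symm : y' = f x).trans (hq x hq0)) hy'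
        · rw [Set.indicator_of_notMem hx]
      rw [this, tsum_zero]
  have hEdelta : entropyE (fun y' : X => if y' = y then 1 else 0) = 0 := by
    unfold entropyE
    convert tsum_zero with y'
    by_cases h : y' = y <;> simp [h]
  have hRdelta : entropyR (fun y' : X => if y' = y then 1 else 0) = 0 := by
    unfold entropyR
    have : ∀ y' : X, (if y' = y then (1:ℝ) else 0) * Real.log (if y' = y then 1 else 0) = 0 := by
      intro y'; by_cases h : y' = y <;> simp [h]
    rw [tsum_congr this, tsum_zero, neg_zero]
  have hpush : pushforward f w = fun y' => if y' = y then 1 else 0 :=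
    hpush_gen w (fun x hx => (hsupp hx).2) hw1
  -- the pointwise entropy identity
  have hterm : ∀ x, -(w x * Real.log (w x)) = w x * G x + w x * Real.log Zy := by
    intro x
    by_cases hx : x ∈ A
    · have hwx : w x = Real.exp (-G x) / Zy := by rw [hwdef, Set.indicator_of_mem hx]
      rw [hwx, Real.log_div (Real.exp_pos _).ne' hZpos.ne', Real.log_exp]
      ring
    · have hwx : w x = 0 := by rw [hwdef, Set.indicator_of_notMem hx]
      simp [hwx]
  -- summability
  have habs : (fun x => |w x * G x|)
      = fun x => A.indicator (fun x => Real.exp (-G x) * |G x|) x / Zy := by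
    funext x
    by_cases hx : x ∈ A
    · rw [hwdef, Set.indicator_of_mem hx, Set.indicator_of_mem hx, abs_mul, abs_div,
        abs_of_nonneg (Real.exp_pos (-G x)).le, abs_of_pos hZpos]
      ring
    · rw [hwdef, Set.indicator_of_notMem hx, Set.indicator_of_notMem hx]
      simp
  have hsumWG : Summable fun x => w x * G x := by
    apply Summable.of_abs
    rw [habs]
    exact hGsum.div_const Zy
  have hgsum : Summable fun x => w x * G x + w x * Real.log Zy :=
    hsumWG.add (hw1.summable.mul_right _)
  have hgnn : ∀ x, 0 ≤ w x * G x + w x * Real.log Zy := by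
    intro x
    rw [← hterm x]
    have h1 : Real.log (w x) ≤ 0 := Real.log_nonpos (hwnn x) (hwle x)
    have h2 : w x * Real.log (w x) ≤ 0 := mul_nonpos_of_nonneg_of_nonpos (hwnn x) h1
    linarith
  have hEw : entropyE w = ENNReal.ofReal (∑' x, (w x * G x + w x * Real.log Zy)) := by
    unfold entropyE
    rw [tsum_congr (fun x => by rw [hterm x])]
    exact (ENNReal.ofReal_tsum_of_nonneg hgnn hgsum).symm
  have htsum_g : (∑' x, (w x * G x + w x * Real.log Zy))
      = (∑' x, w x * G x) + Real.log Zy := by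
    rw [Summable.tsum_add hsumWG (hw1.summable.mul_right _), tsum_mul_right, hw1.tsum_eq, one_mul]
  constructor
  · rw [hpush, hEdelta, hEw, ENNReal.toReal_zero,
      ENNReal.toReal_ofReal (tsum_nonneg hgnn), htsum_g]
    ring
  · intro H
    have hZle : Zy ≤ 1 := by
      apply hasSum_le_of_sum_le hZy
      intro u
      set F : Finset X := u.filter (fun x => x ∈ A) with hF
      have hsum_eq : ∑ x ∈ u, A.indicator (fun x => Real.exp (-G x)) x
          = ∑ x ∈ F, Real.exp (-G x) := by
        rw [hF, Finset.sum_filter]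
        apply Finset.sum_congr rfl
        intro x _
        by_cases hx : x ∈ A <;> simp [hx]
      rw [hsum_eq]
      rcases Finset.eq_empty_or_nonempty F with hFe | hFne
      · simp [hFe]
      -- nonempty case: build the finite Gibbs distribution on F
      set ZF : ℝ := ∑ x ∈ F, Real.exp (-G x) with hZF
      have hZFpos : 0 < ZF :=
        Finset.sum_pos (fun x _ => Real.exp_pos _) hFne
      set p : X → ℝ := fun x => if x ∈ F then Real.exp (-G x) / ZF else 0 with hp
      have hpF : ∀ x ∉ F, p x = 0 := fun x hx => if_neg hx
      have hpnn : ∀ x, 0 ≤ p x := by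
        intro x
        by_cases hx : x ∈ F
        · have : p x = Real.exp (-G x) / ZF := if_pos hx
          rw [this]; positivity
        · rw [hpF x hx]
      have hpsum_val : ∑ x ∈ F, p x = 1 := by
        rw [Finset.sum_congr rfl (fun x hx => if_pos hx), ← Finset.sum_div, ← hZF,
          div_self hZFpos.ne']
      have hp1 : HasSum p 1 := by
        have : HasSum p (∑ x ∈ F, p x) := hasSum_sum_of_ne_finset_zero (s := F) (f := p) hpF
        rwa [hpsum_val] at this
      have hpsupp : Function.support p ⊆ ↑F := by
        intro x hx
        by_contra h
        exact hx (hpF x h)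
      have hFA : ∀ x ∈ F, x ∈ A := by
        intro x hx
        exact (Finset.mem_filter.mp hx).2
      have hfiber : ∀ x, p x ≠ 0 → f x = y := by
        intro x hx
        exact (hFA x (by simpa using hpsupp hx)).2
      have hpD : Function.support p ⊆ D := by
        intro x hx
        exact (hFA x (by simpa using hpsupp hx)).1
      have hpfin : (Function.support p).Finite :=
        Set.Finite.subset F.finite_toSet hpsupp
      have hineq := H p hpnn hp1 hpfin hpD
      rw [hpush_gen p hfiber hp1, hRdelta] at hineq
      -- compute entropyR p
      have hplog : ∀ x, p x * Real.log (p x) = -(p x * G x) - p x * Real.log ZF := by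
        intro x
        by_cases hx : x ∈ F
        · have hpx : p x = Real.exp (-G x) / ZF := if_pos hx
          rw [hpx, Real.log_div (Real.exp_pos _).ne' hZFpos.ne', Real.log_exp]
          ring
        · rw [hpF x hx]; simp
      have hRp : entropyR p = (∑' x, p x * G x) + Real.log ZF := by
        unfold entropyR
        rw [tsum_congr hplog,
          tsum_eq_sum (f := fun x => -(p x * G x) - p x * Real.log ZF)
            (s := F) (fun x hx => by simp [hpF x hx]),
          tsum_eq_sum (f := fun x => p x * G x) (s := F)
            (fun x hx => by simp [hpF x hx])]
        rw [Finset.sum_sub_distrib, Finset.sum_neg_distrib, ← Finset.sum_mul, hpsum_val]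
        ring
      rw [hRp] at hineq
      have hlogZF : Real.log ZF ≤ 0 := by linarith
      by_contra hcon
      push_neg at hcon
      have := Real.log_pos hcon
      linarith
    have := Real.log_nonpos hZpos.le hZle
    linarith
end

section
/- Let 𝒳 be a countable set and let f : 𝒳 ⇀ 𝒳 and G : 𝒳 ⇀ ℝ be partial functions with the same domain of definition dom f. Assume Z(y) := ∑_{x : f(x)=y} e^{−G(x)} ∈ (0,∞) for every y ∈ img f, and define w_y(x) := e^{−G(x)}/Z(y) on the fiber f^{-1}(y). Then for every probability distribution p with supp p ⊆ dom f, finite entropy S(p) < ∞, and ∑_x p(x)|G(x)| < ∞, the entropy production Σ(p) := S(f_*p) − S(p) + ∑_x p(x)G(x) decomposes over the islands (fibers) of f as Σ(p) = ∑_{y ∈ img f} (f_*p)(y) · [ D( p(· | f(x)=y) ‖ w_y ) − ln Z(y) ], where D(q ‖ r) = ∑_x q(x) ln(q(x)/r(x)) is the Kullback–Leibler divergence. -/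
open scoped ENNReal

section helpers

variable {X : Type*}

/-- The disjoint union of the fibers of `f` is equivalent to `X`. -/
private def fiberEquiv (f : X → X) : (Σ y : X, {x // f x = y}) ≃ X where
  toFun s := s.2.1
  invFun x := ⟨f x, x, rfl⟩
  left_inv := by rintro ⟨y, x, rfl⟩; rfl
  right_inv x := rfl

private lemma summable_sigma_fiber (f : X → X) {u : X → ℝ} (hu : Summable u) :
    Summable (fun s : Σ y : X, {x // f x = y} => u s.2.1) :=
  ((fiberEquiv f).summable_iff (f := u)).2 hu

private lemma summable_fiber (f : X → X) {u : X → ℝ} (hu : Summable u) :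
    Summable (fun y => ∑' x, Set.indicator {x | f x = y} u x) := by
  have h : (fun y => ∑' x, Set.indicator {x | f x = y} u x)
      = fun y => ∑' (c : {x // f x = y}), u c.1 := by
    funext y; exact (tsum_subtype {x | f x = y} u).symm
  rw [h]
  exact (summable_sigma_fiber f hu).sigma

private lemma tsum_fiber (f : X → X) {u : X → ℝ} (hu : Summable u) :
    ∑' x, u x = ∑' y, ∑' x, Set.indicator {x | f x = y} u x := by
  calc ∑' x, u x = ∑' s : Σ y : X, {x // f x = y}, u s.2.1 :=
        ((fiberEquiv f).tsum_eq u).symm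
    _ = ∑' y, ∑' (c : {x // f x = y}), u c.1 := Summable.tsum_sigma (summable_sigma_fiber f hu)
    _ = ∑' y, ∑' x, Set.indicator {x | f x = y} u x :=
        tsum_congr fun y => tsum_subtype {x | f x = y} u

private lemma entropy_toReal {q : X → ℝ} (h0 : ∀ x, 0 ≤ q x) (h1 : ∀ x, q x ≤ 1) :
    (entropyE q).toReal = ∑' x, -(q x * Real.log (q x)) := by
  rw [entropyE, ENNReal.tsum_toReal_eq (fun a => ENNReal.ofReal_ne_top)]
  exact tsum_congr fun x => ENNReal.toReal_ofReal
    (neg_nonneg.2 (mul_nonpos_of_nonneg_of_nonpos (h0 x) (Real.log_nonpos (h0 x) (h1 x))))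

private lemma summable_mul_log {q : X → ℝ} (h0 : ∀ x, 0 ≤ q x) (h1 : ∀ x, q x ≤ 1)
    (hfin : entropyE q ≠ ⊤) : Summable (fun x => q x * Real.log (q x)) := by
  have h := ENNReal.summable_toReal hfin
  have heq : (fun x => (ENNReal.ofReal (-(q x * Real.log (q x)))).toReal)
      = fun x => -(q x * Real.log (q x)) := funext fun x => ENNReal.toReal_ofReal
    (neg_nonneg.2 (mul_nonpos_of_nonneg_of_nonpos (h0 x) (Real.log_nonpos (h0 x) (h1 x))))
  rw [heq] at h
  simpa using h.neg

end helpers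

/-- The island decomposition of entropy production (Appendix B of the paper):
with `Z(y) = ∑_{x ∈ D : f(x)=y} e^{−G(x)} ∈ (0,∞)` for every `y ∈ img f` and
the fiber Gibbs distributions `w_y(x) = e^{−G(x)}/Z(y)`, for every probability
distribution `p` supported in `D` with finite entropy and `∑_x p(x)|G(x)| < ∞`,
the entropy production `Σ(p) = S(f_*p) − S(p) + ∑_x p(x)G(x)` decomposes over
the islands (fibers) of `f` as
`Σ(p) = ∑_{y ∈ img f} (f_*p)(y)·[D(p(·|y) ‖ w_y) − ln Z(y)]`,
where `D(q‖r) = ∑_x q(x) ln(q(x)/r(x))` is the Kullback–Leibler divergence. -/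
theorem stmt5 {X : Type*} [Countable X] (D : Set X) (f : X → X) (G : X → ℝ)
    (Z : X → ℝ)
    (hZdef : ∀ y, Z y =
      ∑' x, Set.indicator {x | x ∈ D ∧ f x = y} (fun x => Real.exp (-G x)) x)
    (hZfin : ∀ y ∈ f '' D,
      Summable (Set.indicator {x | x ∈ D ∧ f x = y} (fun x => Real.exp (-G x)))
        ∧ 0 < Z y)
    (p : X → ℝ) (hp : ∀ x, 0 ≤ p x) (hsum : HasSum p 1)
    (hsupp : Function.support p ⊆ D)
    (hent : entropyE p ≠ ⊤) (hGint : Summable (fun x => p x * |G x|)) :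
    (entropyE (pushforward f p)).toReal - (entropyE p).toReal + (∑' x, p x * G x)
      = ∑' y, Set.indicator (f '' D) (fun y =>
          pushforward f p y *
            ((∑' x, (Set.indicator {x | f x = y} p x / pushforward f p y) *
                Real.log ((Set.indicator {x | f x = y} p x / pushforward f p y) /
                  (Set.indicator {x | x ∈ D ∧ f x = y} (fun x => Real.exp (-G x)) x / Z y)))
              - Real.log (Z y))) y := by
  set P := pushforward f p with hPdef
  have hPy : ∀ y, P y = ∑' x, Set.indicator {x | f x = y} p x := fun _ => rfl
  have hpsum : Summable p := hsum.summable
  have hp1 : ∀ x, p x ≤ 1 := fun x => le_hasSum hsum x (fun j _ => hp j)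
  have hLsum : Summable (fun x => p x * Real.log (p x)) := summable_mul_log hp hp1 hent
  have hPGsum : Summable (fun x => p x * G x) := by
    refine Summable.of_abs ?_
    have h : (fun x => |p x * G x|) = fun x => p x * |G x| :=
      funext fun x => by rw [abs_mul, abs_of_nonneg (hp x)]
    rwa [h]
  set S1 : X → ℝ := fun y => ∑' x, Set.indicator {x | f x = y}
    (fun x => p x * Real.log (p x)) x with hS1def
  set S3 : X → ℝ := fun y => ∑' x, Set.indicator {x | f x = y}
    (fun x => p x * G x) x with hS3def
  have hS1sum : Summable S1 := summable_fiber f hLsum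
  have hS3sum : Summable S3 := summable_fiber f hPGsum
  have hS1tot : ∑' x, p x * Real.log (p x) = ∑' y, S1 y := tsum_fiber f hLsum
  have hS3tot : ∑' x, p x * G x = ∑' y, S3 y := tsum_fiber f hPGsum
  have hPnn : ∀ y, 0 ≤ P y := fun y =>
    tsum_nonneg (fun x => Set.indicator_nonneg (fun a _ => hp a) x)
  have hP1 : ∀ y, P y ≤ 1 := by
    intro y
    have h : P y ≤ ∑' x, p x :=
      Summable.tsum_le_tsum (fun x => Set.indicator_le_self' (fun x _ => hp x) x)
        (hpsum.indicator _) hpsum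
    rwa [hsum.tsum_eq] at h
  have hple : ∀ x, p x ≤ P (f x) := by
    intro x
    have h := Summable.le_tsum (hpsum.indicator {x' | f x' = f x}) x
      (fun j _ => Set.indicator_nonneg (fun a _ => hp a) j)
    rw [Set.indicator_of_mem (by exact rfl : x ∈ {x' | f x' = f x})] at h
    exact h
  -- summability of P log P via a comparison bound
  have hkey : ∀ y, -(P y * Real.log (P y))
      ≤ ∑' x, Set.indicator {x | f x = y} (fun x => -(p x * Real.log (p x))) x := by
    intro y
    rcases eq_or_lt_of_le (hPnn y) with h0 | hpos
    · rw [← h0]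
      simp only [zero_mul, neg_zero]
      exact tsum_nonneg fun x => Set.indicator_nonneg
        (fun a _ => neg_nonneg.2
          (mul_nonpos_of_nonneg_of_nonpos (hp a) (Real.log_nonpos (hp a) (hp1 a)))) x
    · have heq : -(P y * Real.log (P y))
          = ∑' x, Set.indicator {x | f x = y} p x * (-(Real.log (P y))) := by
        rw [tsum_mul_right, ← hPy]
        ring
      rw [heq]
      refine Summable.tsum_le_tsum (fun x => ?_) ((hpsum.indicator _).mul_right _)
        (hLsum.neg.indicator _)
      by_cases hx : x ∈ {x | f x = y}
      · rw [Set.indicator_of_mem hx, Set.indicator_of_mem hx]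
        rcases eq_or_lt_of_le (hp x) with h0 | hp0
        · simp [← h0]
        · have hlog : Real.log (p x) ≤ Real.log (P y) := by
            refine Real.log_le_log hp0 ?_
            have := hple x
            rwa [hx] at this
          nlinarith
      · simp [Set.indicator_of_notMem hx]
  have hPlogsum : Summable (fun y => P y * Real.log (P y)) := by
    have hnn : ∀ y, 0 ≤ -(P y * Real.log (P y)) := fun y =>
      neg_nonneg.2 (mul_nonpos_of_nonneg_of_nonpos (hPnn y)
        (Real.log_nonpos (hPnn y) (hP1 y)))
    have h := Summable.of_nonneg_of_le hnn hkey (summable_fiber f hLsum.neg)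
    simpa using h.neg
  -- vanishing on islands without mass
  have hvan : ∀ y, (∀ x, f x = y → p x = 0) → S1 y = 0 ∧ S3 y = 0 ∧ P y = 0 := by
    intro y hzero
    have h1 : Set.indicator {x | f x = y} (fun x => p x * Real.log (p x))
        = fun _ => (0 : ℝ) := by
      funext x
      by_cases hx : x ∈ {x | f x = y}
      · rw [Set.indicator_of_mem hx]
        simp [hzero x hx]
      · exact Set.indicator_of_notMem hx _
    have h2 : Set.indicator {x | f x = y} (fun x => p x * G x) = fun _ => (0 : ℝ) := by
      funext x
      by_cases hx : x ∈ {x | f x = y}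
      · rw [Set.indicator_of_mem hx]
        simp [hzero x hx]
      · exact Set.indicator_of_notMem hx _
    have h3 : Set.indicator {x | f x = y} p = fun _ => (0 : ℝ) := by
      funext x
      by_cases hx : x ∈ {x | f x = y}
      · rw [Set.indicator_of_mem hx]
        exact hzero x hx
      · exact Set.indicator_of_notMem hx _
    refine ⟨?_, ?_, ?_⟩
    · simp only [hS1def, h1, tsum_zero]
    · simp only [hS3def, h2, tsum_zero]
    · simp only [hPy, h3, tsum_zero]
  -- the per-island identity
  have hisland : ∀ y, Set.indicator (f '' D) (fun y =>
        P y *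
          ((∑' x, (Set.indicator {x | f x = y} p x / P y) *
              Real.log ((Set.indicator {x | f x = y} p x / P y) /
                (Set.indicator {x | x ∈ D ∧ f x = y} (fun x => Real.exp (-G x)) x / Z y)))
            - Real.log (Z y))) y
      = S1 y - P y * Real.log (P y) + S3 y := by
    intro y
    by_cases hy : y ∈ f '' D
    · obtain ⟨hZsummable, hZpos⟩ := hZfin y hy
      rw [Set.indicator_of_mem hy]
      rcases eq_or_lt_of_le (hPnn y) with hP0 | hPpos
      · -- island carries no mass
        have hzero : ∀ x, f x = y → p x = 0 := by
          intro x hx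
          have h1 := Summable.le_tsum (hpsum.indicator {x' | f x' = y}) x
            (fun j _ => Set.indicator_nonneg (fun a _ => hp a) j)
          rw [Set.indicator_of_mem (by exact hx : x ∈ {x' | f x' = y})] at h1
          rw [← hPy, ← hP0] at h1
          linarith [hp x]
        obtain ⟨e1, e2, e3⟩ := hvan y hzero
        rw [e1, e2, e3]
        simp
      · have hPne : P y ≠ 0 := ne_of_gt hPpos
        have hterm : ∀ x, (Set.indicator {x | f x = y} p x / P y) *
              Real.log ((Set.indicator {x | f x = y} p x / P y) /
                (Set.indicator {x | x ∈ D ∧ f x = y} (fun x => Real.exp (-G x)) x / Z y))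
            = Set.indicator {x | f x = y}
                (fun x => p x * Real.log (p x) + p x * G x
                  + p x * (Real.log (Z y) - Real.log (P y))) x / P y := by
          intro x
          by_cases hx : x ∈ {x | f x = y}
          · rw [Set.indicator_of_mem hx, Set.indicator_of_mem hx]
            rcases eq_or_lt_of_le (hp x) with h0 | hp0
            · rw [← h0]
              simp
            · have hxD : x ∈ D := hsupp (ne_of_gt hp0)
              have hxmem2 : x ∈ {x | x ∈ D ∧ f x = y} := ⟨hxD, hx⟩
              rw [Set.indicator_of_mem hxmem2]
              have hexp : Real.exp (-G x) ≠ 0 := (Real.exp_pos _).ne'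
              have h1 : p x / P y ≠ 0 := div_ne_zero (ne_of_gt hp0) hPne
              have h2 : Real.exp (-G x) / Z y ≠ 0 := div_ne_zero hexp (ne_of_gt hZpos)
              rw [Real.log_div h1 h2, Real.log_div (ne_of_gt hp0) hPne,
                Real.log_div hexp (ne_of_gt hZpos), Real.log_exp]
              field_simp
              ring
          · have hx2 : x ∉ {x | x ∈ D ∧ f x = y} := fun h => hx h.2
            rw [Set.indicator_of_notMem hx, Set.indicator_of_notMem hx]
            simp
        have hsum_ind : ∑' x, Set.indicator {x | f x = y}
              (fun x => p x * Real.log (p x) + p x * G x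
                + p x * (Real.log (Z y) - Real.log (P y))) x
            = S1 y + S3 y + P y * (Real.log (Z y) - Real.log (P y)) := by
          have hsplit : Set.indicator {x | f x = y}
              (fun x => p x * Real.log (p x) + p x * G x
                + p x * (Real.log (Z y) - Real.log (P y)))
              = fun x => Set.indicator {x | f x = y} (fun x => p x * Real.log (p x)) x
                  + Set.indicator {x | f x = y} (fun x => p x * G x) x
                  + Set.indicator {x | f x = y} p x * (Real.log (Z y) - Real.log (P y)) := by
            funext x
            by_cases hx : x ∈ {x | f x = y}
            · rw [Set.indicator_of_mem hx, Set.indicator_of_mem hx,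
                Set.indicator_of_mem hx, Set.indicator_of_mem hx]
            · simp only [Set.indicator_of_notMem hx]
              ring
          rw [hsplit, Summable.tsum_add ((hLsum.indicator _).add (hPGsum.indicator _))
              ((hpsum.indicator _).mul_right _),
            Summable.tsum_add (hLsum.indicator _) (hPGsum.indicator _), tsum_mul_right,
            ← hPy, hS1def, hS3def]
        rw [tsum_congr hterm, tsum_div_const, hsum_ind]
        field_simp
        ring
    · rw [Set.indicator_of_notMem hy]
      have hzero : ∀ x, f x = y → p x = 0 := by
        intro x hx
        by_contra h
        exact hy ⟨x, hsupp h, hx⟩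
      obtain ⟨e1, e2, e3⟩ := hvan y hzero
      rw [e1, e2, e3]
      simp
  -- assemble
  have hEntP : (entropyE P).toReal = ∑' y, -(P y * Real.log (P y)) :=
    entropy_toReal hPnn hP1
  have hEntp : (entropyE p).toReal = ∑' x, -(p x * Real.log (p x)) :=
    entropy_toReal hp hp1
  rw [hEntP, hEntp, tsum_congr hisland, tsum_neg, tsum_neg,
    Summable.tsum_add (hS1sum.sub hPlogsum) hS3sum, Summable.tsum_sub hS1sum hPlogsum,
    ← hS1tot, ← hS3tot]
  ring
end

section
/- Let S ⊆ {0,1}* and let c ∈ ℕ. Suppose there is an injective map ψ from the set of binary strings of length at least 1 into S such that for every binary string x with ℓ(x) ≥ 1, ℓ(x) < ℓ(ψ(x)) ≤ ℓ(x) + 2·⌈log₂ ℓ(x)⌉ + c. Then ∑_{s ∈ S} 2^{−ℓ(s)} ℓ(s) = ∞. -/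
open scoped ENNReal NNReal

lemma harmonic_top' : (∑' n : ℕ, ((n : ℝ≥0∞) + 1)⁻¹) = ⊤ := by
  have h1 : ¬ Summable (fun n : ℕ => ((n : ℝ) + 1)⁻¹) := by
    have := mt (summable_nat_add_iff (f := fun n : ℕ ↦ (n : ℝ)⁻¹) 1).1
      Real.not_summable_natCast_inv
    simpa using this
  have h2 : ¬ Summable (fun n : ℕ => ((n : ℝ≥0) + 1)⁻¹) := by
    rw [← NNReal.summable_coe]
    simpa using h1
  have := (ENNReal.tsum_coe_ne_top_iff_summable
    (f := fun n : ℕ => ((n : ℝ≥0) + 1)⁻¹)).not.mpr h2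
  rw [not_not] at this
  rw [← this]
  congr 1
  ext n
  rw [ENNReal.coe_inv (by positivity)]
  push_cast
  rfl

lemma clog_bound' (n : ℕ) : 2 ^ Nat.clog 2 (n + 1) ≤ 2 * (n + 1) := by
  rcases Nat.eq_zero_or_pos (Nat.clog 2 (n + 1)) with h | h
  · simp [h]; omega
  · have hn : 1 < n + 1 := by
      rcases Nat.eq_zero_or_pos n with rfl | hn
      · have h1 : Nat.clog 2 (0 + 1) = 0 := Nat.clog_one_right 2
        omega
      · omega
    obtain ⟨j, hj⟩ : ∃ j, Nat.clog 2 (n + 1) = j + 1 := ⟨_, (Nat.succ_pred_eq_of_pos h).symm⟩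
    have h2 := Nat.pow_pred_clog_lt_self (b := 2) (by norm_num) hn
    rw [hj] at h2 ⊢
    simp only [Nat.pred_succ, Nat.add_sub_cancel, Nat.succ_sub_one] at h2
    rw [pow_succ]
    omega

/-- Abstract form of Lemma 3 (infapp) of Appendix F of the paper: if there is
an injective map `ψ` from the set of binary strings of length at least `1`
into `S ⊆ {0,1}*` with `ℓ(x) < ℓ(ψ(x)) ≤ ℓ(x) + 2⌈log₂ ℓ(x)⌉ + c`, then
`∑_{s ∈ S} 2^{−ℓ(s)} ℓ(s) = ∞`. -/
theorem stmt10 (S : Set (List Bool)) (c : ℕ) (ψ : List Bool → List Bool)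
    (hmem : ∀ x : List Bool, 1 ≤ x.length → ψ x ∈ S)
    (hinj : Set.InjOn ψ {x : List Bool | 1 ≤ x.length})
    (hlb : ∀ x : List Bool, 1 ≤ x.length → x.length < (ψ x).length)
    (hub : ∀ x : List Bool, 1 ≤ x.length →
      (ψ x).length ≤ x.length + 2 * Nat.clog 2 x.length + c) :
    (∑' s, Set.indicator S
      (fun s => ((2 : ℝ≥0∞)⁻¹) ^ s.length * (s.length : ℝ≥0∞)) s) = ⊤ := by
  set f : List Bool → ℝ≥0∞ :=
    fun s => ((2 : ℝ≥0∞)⁻¹) ^ s.length * (s.length : ℝ≥0∞) with hf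
  set i : (Σ n : ℕ, List.Vector Bool (n + 1)) → List Bool :=
    fun p => ψ p.2.1 with hi
  have hinj' : Function.Injective i := by
    rintro ⟨n, v⟩ ⟨m, w⟩ h
    have hv : v.1.length = n + 1 := v.2
    have hw : w.1.length = m + 1 := w.2
    have heq : v.1 = w.1 := hinj (by simp [Set.mem_setOf_eq, hv]) (by simp [Set.mem_setOf_eq, hw]) h
    have hnm : n = m := by
      have := congrArg List.length heq
      rw [hv, hw] at this; omega
    subst hnm
    exact congrArg _ (Subtype.ext heq)
  have hpt : ∀ p : (Σ n : ℕ, List.Vector Bool (n + 1)),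
      ((2 : ℝ≥0∞)⁻¹) ^ ((p.1 + 1) + (2 * Nat.clog 2 (p.1 + 1) + c)) * ((p.1 : ℝ≥0∞) + 1)
        ≤ Set.indicator S f (i p) := by
    rintro ⟨n, v⟩
    have hv : v.1.length = n + 1 := v.2
    have h1 : (1 : ℕ) ≤ v.1.length := by omega
    rw [Set.indicator_of_mem (hmem _ h1)]
    have hlen1 : n + 1 ≤ (ψ v.1).length := by have := hlb _ h1; omega
    have hlen2 : (ψ v.1).length ≤ (n + 1) + (2 * Nat.clog 2 (n + 1) + c) := by
      have := hub _ h1; rw [hv] at this; omega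
    simp only [hf, hi]
    refine mul_le_mul' (pow_le_pow_of_le_one (zero_le (a := _))
      (ENNReal.inv_le_one.mpr one_le_two) hlen2) ?_
    have : ((n : ℝ≥0∞) + 1) = ((n + 1 : ℕ) : ℝ≥0∞) := by push_cast; ring
    rw [this]
    exact_mod_cast hlen1
  have hge : ∑' p, Set.indicator S f (i p) ≤ ∑' s, Set.indicator S f s :=
    ENNReal.tsum_comp_le_tsum_of_injective hinj' _
  refine top_le_iff.mp (le_trans ?_ hge)
  refine le_trans ?_ (ENNReal.tsum_le_tsum hpt)
  rw [ENNReal.tsum_sigma']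
  have hfib : ∀ n : ℕ, (∑' _ : List.Vector Bool (n + 1),
      ((2 : ℝ≥0∞)⁻¹) ^ ((n + 1) + (2 * Nat.clog 2 (n + 1) + c)) * ((n : ℝ≥0∞) + 1))
      = (2 : ℝ≥0∞) ^ (n + 1) *
        (((2 : ℝ≥0∞)⁻¹) ^ ((n + 1) + (2 * Nat.clog 2 (n + 1) + c)) * ((n : ℝ≥0∞) + 1)) := by
    intro n
    rw [tsum_fintype, Finset.sum_const, nsmul_eq_mul]
    congr 1
    rw [Finset.card_univ, card_vector]
    push_cast
    norm_num
  rw [tsum_congr hfib]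
  -- simplify each term
  have hterm : ∀ n : ℕ, (2 : ℝ≥0∞) ^ (n + 1) *
      (((2 : ℝ≥0∞)⁻¹) ^ ((n + 1) + (2 * Nat.clog 2 (n + 1) + c)) * ((n : ℝ≥0∞) + 1))
      = ((2 : ℝ≥0∞) ^ (2 * Nat.clog 2 (n + 1) + c))⁻¹ * ((n : ℝ≥0∞) + 1) := by
    intro n
    have h1 : (2 : ℝ≥0∞) ^ (n + 1) * ((2 : ℝ≥0∞)⁻¹) ^ (n + 1) = 1 := by
      rw [← ENNReal.inv_pow,
        ENNReal.mul_inv_cancel (by positivity) (ENNReal.pow_ne_top ENNReal.ofNat_ne_top)]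
    calc (2 : ℝ≥0∞) ^ (n + 1) *
        (((2 : ℝ≥0∞)⁻¹) ^ ((n + 1) + (2 * Nat.clog 2 (n + 1) + c)) * ((n : ℝ≥0∞) + 1))
        = ((2 : ℝ≥0∞) ^ (n + 1) * ((2 : ℝ≥0∞)⁻¹) ^ (n + 1)) *
          (((2 : ℝ≥0∞)⁻¹) ^ (2 * Nat.clog 2 (n + 1) + c) * ((n : ℝ≥0∞) + 1)) := by
          rw [pow_add]; ring
      _ = ((2 : ℝ≥0∞)⁻¹) ^ (2 * Nat.clog 2 (n + 1) + c) * ((n : ℝ≥0∞) + 1) := by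
          rw [h1, one_mul]
      _ = ((2 : ℝ≥0∞) ^ (2 * Nat.clog 2 (n + 1) + c))⁻¹ * ((n : ℝ≥0∞) + 1) := by
          rw [ENNReal.inv_pow]

  rw [tsum_congr hterm]
  -- lower bound each term by (2^(c+2))⁻¹ * (n+1)⁻¹
  have hbound : ∀ n : ℕ, ((2 : ℝ≥0∞) ^ (c + 2))⁻¹ * ((n : ℝ≥0∞) + 1)⁻¹
      ≤ ((2 : ℝ≥0∞) ^ (2 * Nat.clog 2 (n + 1) + c))⁻¹ * ((n : ℝ≥0∞) + 1) := by
    intro n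
    set A : ℝ≥0∞ := (n : ℝ≥0∞) + 1 with hA
    have hA0 : A ≠ 0 := by simp [hA]
    have hAt : A ≠ ⊤ := by simp [hA]
    have hnat : (2 : ℕ) ^ (2 * Nat.clog 2 (n + 1) + c) ≤ 2 ^ (c + 2) * (n + 1) ^ 2 := by
      have h1 : (2 : ℕ) ^ Nat.clog 2 (n + 1) ≤ 2 * (n + 1) := clog_bound' n
      calc (2 : ℕ) ^ (2 * Nat.clog 2 (n + 1) + c)
          = ((2 : ℕ) ^ Nat.clog 2 (n + 1)) ^ 2 * 2 ^ c := by
            rw [← pow_mul, ← pow_add]; ring_nf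
        _ ≤ (2 * (n + 1)) ^ 2 * 2 ^ c := by gcongr
        _ = 2 ^ (c + 2) * (n + 1) ^ 2 := by ring
    have hcast : ((2 : ℝ≥0∞) ^ (2 * Nat.clog 2 (n + 1) + c))
        ≤ (2 : ℝ≥0∞) ^ (c + 2) * A ^ 2 := by
      have := Nat.cast_le (α := ℝ≥0∞).mpr hnat
      push_cast at this
      convert this using 2
    calc ((2 : ℝ≥0∞) ^ (c + 2))⁻¹ * A⁻¹
        = ((2 : ℝ≥0∞) ^ (c + 2) * A)⁻¹ := by
          rw [ENNReal.mul_inv (Or.inl (by positivity))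
            (Or.inl (ENNReal.pow_ne_top ENNReal.ofNat_ne_top))]
      _ ≤ ((2 : ℝ≥0∞) ^ (2 * Nat.clog 2 (n + 1) + c) * A⁻¹)⁻¹ := by
          apply ENNReal.inv_le_inv.mpr
          calc (2 : ℝ≥0∞) ^ (2 * Nat.clog 2 (n + 1) + c) * A⁻¹
              ≤ ((2 : ℝ≥0∞) ^ (c + 2) * A ^ 2) * A⁻¹ := by gcongr
            _ = (2 : ℝ≥0∞) ^ (c + 2) * A := by
                rw [sq, mul_assoc, mul_assoc, ENNReal.mul_inv_cancel hA0 hAt, mul_one]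
      _ = ((2 : ℝ≥0∞) ^ (2 * Nat.clog 2 (n + 1) + c))⁻¹ * A := by
          rw [ENNReal.mul_inv (Or.inl (by positivity))
            (Or.inr (ENNReal.inv_ne_zero.mpr hAt)), inv_inv]
  refine le_trans ?_ (ENNReal.tsum_le_tsum hbound)
  rw [ENNReal.tsum_mul_left, harmonic_top',
    ENNReal.mul_top (ENNReal.inv_ne_zero.mpr (ENNReal.pow_ne_top ENNReal.ofNat_ne_top))]
end

section
/- Let f : {0,1}* ⇀ {0,1}* be a partial function whose domain of definition dom f is prefix-free and nonempty, let Ω := ∑_{x ∈ dom f} 2^{−ℓ(x)} ∈ (0,1], and let p_coin(x) := 2^{−ℓ(x)}/Ω be the coin-flipping distribution on dom f. Suppose that for every y ∈ img f, ∑_{x : f(x)=y} 2^{−ℓ(x)} ℓ(x) = ∞. Then for every function G : dom f → ℝ satisfying ∑_{x : f(x)=y} e^{−G(x)} ≤ 1 for all y ∈ img f, the expectation ∑_{x ∈ dom f} p_coin(x) G(x) = ∞. In words: any heat function consistent with realizing f must generate infinite expected heat on the coin-flipping input distribution. -/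
open scoped ENNReal

/-- A set of finite binary strings is prefix-free if no element is a proper
prefix of another element. -/
def PrefixFree (S : Set (List Bool)) : Prop :=
  ∀ x ∈ S, ∀ y ∈ S, x <+: y → x = y

/-- The weight `2^{−ℓ(x)}` of a binary string `x`. -/
noncomputable def wt (x : List Bool) : ℝ := (2 : ℝ) ^ (-(x.length : ℤ))

/-- The halting probability `Ω = ∑_{x ∈ D} 2^{−ℓ(x)}`. -/
noncomputable def Omega (D : Set (List Bool)) : ℝ :=
  ∑' x, Set.indicator D wt x

/-- The coin-flipping input distribution `p_coin(x) = 2^{−ℓ(x)}/Ω` on `D`. -/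
noncomputable def pcoin (D : Set (List Bool)) (x : List Bool) : ℝ :=
  Set.indicator D wt x / Omega D

lemma wt_pos (x : List Bool) : 0 < wt x := by
  unfold wt; positivity

/-- Counting form of Kraft's inequality for a finite prefix-free set. -/
lemma count_lemma (D : Set (List Bool)) (hD : PrefixFree D) (F : Finset (List Bool))
    (hF : ∀ x ∈ F, x ∈ D) (n : ℕ) (hn : ∀ x ∈ F, x.length ≤ n) :
    ∑ x ∈ F, 2 ^ (n - x.length) ≤ 2 ^ n := by
  classical
  set E : List Bool → Finset (List Bool) := fun x =>
    (Finset.univ : Finset (Fin (n - x.length) → Bool)).image (fun g => x ++ List.ofFn g) with hE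
  have hcard : ∀ x : List Bool, (E x).card = 2 ^ (n - x.length) := by
    intro x
    rw [hE, Finset.card_image_of_injective _ (fun g g' h => List.ofFn_injective
      (List.append_cancel_left h)), Finset.card_univ, Fintype.card_fun]
    simp
  have hmem : ∀ x, ∀ z ∈ E x, x <+: z ∧ (x.length ≤ n → z.length = n) := by
    intro x z hz
    simp only [hE, Finset.mem_image, Finset.mem_univ, true_and] at hz
    obtain ⟨g, rfl⟩ := hz
    refine ⟨List.prefix_append _ _, fun h => ?_⟩
    simp [List.length_ofFn]
    omega
  have hdisj : ∀ x ∈ F, ∀ y ∈ F, x ≠ y → Disjoint (E x) (E y) := by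
    intro x hx y hy hxy
    rw [Finset.disjoint_left]
    intro z hzx hzy
    rcases List.prefix_or_prefix_of_prefix (hmem x z hzx).1 (hmem y z hzy).1 with h | h
    · exact hxy (hD x (hF x hx) y (hF y hy) h)
    · exact hxy ((hD y (hF y hy) x (hF x hx) h).symm)
  calc ∑ x ∈ F, 2 ^ (n - x.length) = ∑ x ∈ F, (E x).card := by
        simp [hcard]
    _ = (F.biUnion E).card := (Finset.card_biUnion hdisj).symm
    _ ≤ (Finset.univ : Finset (Fin n → Bool)).card := by
        apply Finset.card_le_card_of_injOn (fun z (i : Fin n) => z.getD i false)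
        · intro z _; simp
        · intro z hz z' hz' h
          simp only [Finset.coe_biUnion, Finset.mem_coe, Set.mem_iUnion] at hz hz'
          obtain ⟨x, hx, hzx⟩ := hz
          obtain ⟨x', hx', hzx'⟩ := hz'
          have lz : z.length = n := (hmem x z hzx).2 (hn x hx)
          have lz' : z'.length = n := (hmem x' z' hzx').2 (hn x' hx')
          refine List.ext_getElem (by omega) (fun i h1 h2 => ?_)
          have hh := congrFun h ⟨i, by omega⟩
          simp only [] at hh
          rwa [List.getD_eq_getElem z false (by omega),
            List.getD_eq_getElem z' false (by omega)] at hh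
    _ = 2 ^ n := by rw [Finset.card_univ, Fintype.card_fun]; simp

/-- Kraft's inequality for finite subsets of a prefix-free set. -/
lemma kraft_sum (D : Set (List Bool)) (hD : PrefixFree D) (F : Finset (List Bool))
    (hF : ∀ x ∈ F, x ∈ D) : ∑ x ∈ F, wt x ≤ 1 := by
  classical
  set n := F.sup List.length with hn
  have hle : ∀ x ∈ F, x.length ≤ n := fun x hx => Finset.le_sup hx
  have key : (∑ x ∈ F, (2:ℝ) ^ (n - x.length)) ≤ 2 ^ n := by
    have := count_lemma D hD F hF n hle
    calc (∑ x ∈ F, (2:ℝ) ^ (n - x.length)) = ((∑ x ∈ F, 2 ^ (n - x.length) : ℕ) : ℝ) := by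
          push_cast; ring
      _ ≤ ((2^n : ℕ) : ℝ) := by exact_mod_cast this
      _ = 2 ^ n := by push_cast; ring
  have hwt : ∀ x ∈ F, wt x = (2:ℝ) ^ (n - x.length) / 2 ^ n := by
    intro x hx
    have h1 : (2:ℝ) ^ (n - x.length) * 2 ^ x.length = 2 ^ n := by
      rw [← pow_add]; congr 1; have := hle x hx; omega
    rw [wt, zpow_neg, zpow_natCast, eq_div_iff (by positivity)]
    rw [← h1]; field_simp
  calc ∑ x ∈ F, wt x = (∑ x ∈ F, (2:ℝ) ^ (n - x.length)) / 2 ^ n := by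
        rw [Finset.sum_div]; exact Finset.sum_congr rfl hwt
    _ ≤ 2 ^ n / 2 ^ n := by gcongr
    _ = 1 := by field_simp

/-- Kraft's inequality in `ℝ≥0∞`. -/
lemma kraft_ennreal (D : Set (List Bool)) (hD : PrefixFree D) :
    ∑' x, ENNReal.ofReal (Set.indicator D wt x) ≤ 1 := by
  classical
  rw [ENNReal.tsum_eq_iSup_sum]
  apply iSup_le
  intro F
  have h1 : ∑ x ∈ F, ENNReal.ofReal (Set.indicator D wt x)
      = ENNReal.ofReal (∑ x ∈ F, Set.indicator D wt x) := by
    rw [ENNReal.ofReal_sum_of_nonneg]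
    intro i _; exact Set.indicator_nonneg (fun y _ => (wt_pos y).le) i
  rw [h1]
  have h2 : ∑ x ∈ F, Set.indicator D wt x = ∑ x ∈ F.filter (· ∈ D), wt x := by
    rw [Finset.sum_filter]
    refine Finset.sum_congr rfl (fun x _ => ?_)
    by_cases h : x ∈ D <;> simp [h]
  rw [h2, ← ENNReal.ofReal_one]
  exact ENNReal.ofReal_le_ofReal (kraft_sum D hD _ (fun x hx => (Finset.mem_filter.mp hx).2))

lemma summable_ind (D : Set (List Bool)) (hD : PrefixFree D) :
    Summable (Set.indicator D wt) := by
  have h := ENNReal.summable_toReal (f := fun x => ENNReal.ofReal (Set.indicator D wt x))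
    (lt_of_le_of_lt (kraft_ennreal D hD) ENNReal.one_lt_top).ne
  refine h.congr (fun x => ?_)
  exact ENNReal.toReal_ofReal (Set.indicator_nonneg (fun y _ => (wt_pos y).le) x)

lemma omega_pos (D : Set (List Bool)) (hD : PrefixFree D) (hne : D.Nonempty) :
    0 < Omega D := by
  obtain ⟨x₀, hx₀⟩ := hne
  have := Summable.le_tsum (summable_ind D hD) x₀
    (fun j _ => Set.indicator_nonneg (fun y _ => (wt_pos y).le) j)
  calc (0:ℝ) < wt x₀ := wt_pos x₀
    _ = Set.indicator D wt x₀ := by rw [Set.indicator_of_mem hx₀]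
    _ ≤ Omega D := this

/-- The Gibbs-type pointwise inequality used in the main proof. -/
lemma pointwise_ineq (x : List Bool) (G : List Bool → ℝ) :
    ENNReal.ofReal (Real.log 2) * (((2 : ℝ≥0∞)⁻¹) ^ x.length * (x.length : ℝ≥0∞))
      ≤ ENNReal.ofReal (wt x * G x) + ENNReal.ofReal (Real.exp (-G x)) := by
  set a := wt x with ha
  set b := Real.exp (-G x) with hb
  have hap : 0 < a := wt_pos x
  have hbp : 0 < b := Real.exp_pos _
  have hlog : Real.log (b / a) ≤ b / a - 1 := Real.log_le_sub_one_of_pos (by positivity)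
  have hla : Real.log a = -(x.length : ℝ) * Real.log 2 := by
    rw [ha, wt, Real.log_zpow]; push_cast; ring
  have hlb : Real.log b = -G x := Real.log_exp _
  have key : Real.log 2 * (a * x.length) ≤ a * G x + b := by
    have h1 : a * Real.log (b / a) ≤ b - a := by
      have := mul_le_mul_of_nonneg_left hlog hap.le
      calc a * Real.log (b/a) ≤ a * (b/a - 1) := this
        _ = b - a := by field_simp
    rw [Real.log_div hbp.ne' hap.ne', hlb, hla] at h1
    nlinarith [hap, hbp]
  have e1 : ENNReal.ofReal (Real.log 2) * (((2 : ℝ≥0∞)⁻¹) ^ x.length * (x.length : ℝ≥0∞))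
      = ENNReal.ofReal (Real.log 2 * (a * x.length)) := by
    rw [ENNReal.ofReal_mul (Real.log_nonneg one_le_two), ENNReal.ofReal_mul hap.le]
    congr 1
    congr 1
    · rw [ha, wt, zpow_neg, zpow_natCast, ← inv_pow, ENNReal.ofReal_pow (by norm_num)]
      congr 1
      rw [ENNReal.ofReal_inv_of_pos (by norm_num)]
      norm_num
    · exact (ENNReal.ofReal_natCast _).symm
  rw [e1]
  calc ENNReal.ofReal (Real.log 2 * (a * x.length)) ≤ ENNReal.ofReal (a * G x + b) :=
        ENNReal.ofReal_le_ofReal key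
    _ ≤ ENNReal.ofReal (a * G x) + ENNReal.ofReal b := ENNReal.ofReal_add_le

/-- Section IV and Appendix F of the paper: for a partial function `f` with
nonempty prefix-free domain `D` such that every fiber satisfies
`∑_{x : f(x)=y} 2^{−ℓ(x)} ℓ(x) = ∞`, any heat function `G` consistent with
realizing `f` (i.e. with `∑_{x : f(x)=y} e^{−G(x)} ≤ 1` for all `y ∈ img f`)
generates infinite expected heat on the coin-flipping input distribution:
`∑_{x ∈ D} p_coin(x) G(x) = ∞`. -/
theorem stmt12 (D : Set (List Bool)) (hD : PrefixFree D) (hne : D.Nonempty)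
    (f : List Bool → List Bool)
    (hfib : ∀ y ∈ f '' D,
      (∑' x, Set.indicator {x | x ∈ D ∧ f x = y}
        (fun x => ((2 : ℝ≥0∞)⁻¹) ^ x.length * (x.length : ℝ≥0∞)) x) = ⊤)
    (G : List Bool → ℝ)
    (hG : ∀ y ∈ f '' D,
      (∑' x, Set.indicator {x | x ∈ D ∧ f x = y}
        (fun x => ENNReal.ofReal (Real.exp (-G x))) x) ≤ 1) :
    (∑' x, Set.indicator D (fun x => ENNReal.ofReal (pcoin D x * G x)) x) = ⊤ := by
  classical
  obtain ⟨x₀, hx₀⟩ := hne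
  have hy : f x₀ ∈ f '' D := ⟨x₀, hx₀, rfl⟩
  set S : Set (List Bool) := {x | x ∈ D ∧ f x = f x₀} with hS
  have hSD : ∀ x ∈ S, x ∈ D := fun x hx => hx.1
  have Hl := hfib (f x₀) hy
  have HG := hG (f x₀) hy
  set A := ∑' x, Set.indicator S (fun x => ENNReal.ofReal (wt x * G x)) x with hA
  set B := ∑' x, Set.indicator S (fun x => ENNReal.ofReal (Real.exp (-G x))) x with hB
  have hpt : ∀ x, Set.indicator S (fun x => ENNReal.ofReal (Real.log 2) *
      (((2:ℝ≥0∞)⁻¹)^x.length * (x.length:ℝ≥0∞))) x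
      ≤ Set.indicator S (fun x => ENNReal.ofReal (wt x * G x)) x
        + Set.indicator S (fun x => ENNReal.ofReal (Real.exp (-G x))) x := by
    intro x
    by_cases hx : x ∈ S
    · simp only [Set.indicator_of_mem hx]; exact pointwise_ineq x G
    · simp [Set.indicator_of_notMem hx]
  have hsumpt := Summable.tsum_le_tsum hpt ENNReal.summable ENNReal.summable
  rw [ENNReal.tsum_add] at hsumpt
  have hc : ENNReal.ofReal (Real.log 2) ≠ 0 := by
    simp only [ne_eq, ENNReal.ofReal_eq_zero, not_le]
    exact Real.log_pos (by norm_num)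
  have hLHS : (∑' x, Set.indicator S (fun x => ENNReal.ofReal (Real.log 2) *
      (((2:ℝ≥0∞)⁻¹)^x.length * (x.length:ℝ≥0∞))) x) = ⊤ := by
    have heq : ∀ x, Set.indicator S (fun x => ENNReal.ofReal (Real.log 2) *
        (((2:ℝ≥0∞)⁻¹)^x.length * (x.length:ℝ≥0∞))) x
        = ENNReal.ofReal (Real.log 2) * Set.indicator S
          (fun x => ((2:ℝ≥0∞)⁻¹)^x.length * (x.length:ℝ≥0∞)) x := by
      intro x; by_cases hx : x ∈ S <;> simp [Set.indicator_of_mem, Set.indicator_of_notMem, hx]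
    rw [tsum_congr heq, ENNReal.tsum_mul_left, Hl, ENNReal.mul_top hc]
  rw [hLHS] at hsumpt
  have hAtop : A = ⊤ := by
    by_contra h
    exact (ENNReal.add_ne_top.mpr ⟨h, ne_top_of_le_ne_top ENNReal.one_ne_top HG⟩)
      (top_le_iff.mp hsumpt)
  have hΩ : 0 < Omega D := omega_pos D hD ⟨x₀, hx₀⟩
  have hfinal : ∀ x, Set.indicator S (fun x => ENNReal.ofReal (wt x * G x)) x
      * (ENNReal.ofReal (Omega D))⁻¹
      ≤ Set.indicator D (fun x => ENNReal.ofReal (pcoin D x * G x)) x := by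
    intro x
    by_cases hx : x ∈ S
    · rw [Set.indicator_of_mem hx, Set.indicator_of_mem (hSD x hx)]
      have : pcoin D x * G x = wt x * G x / Omega D := by
        rw [pcoin, Set.indicator_of_mem (hSD x hx)]; ring
      rw [this, ENNReal.ofReal_div_of_pos hΩ, div_eq_mul_inv]
    · simp [Set.indicator_of_notMem hx]
  have hle : ⊤ ≤ ∑' x, Set.indicator D (fun x => ENNReal.ofReal (pcoin D x * G x)) x := by
    have h1 : (∑' x, Set.indicator S (fun x => ENNReal.ofReal (wt x * G x)) x
        * (ENNReal.ofReal (Omega D))⁻¹) = ⊤ := by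
      rw [ENNReal.tsum_mul_right, ← hA, hAtop, ENNReal.top_mul]
      exact ENNReal.inv_ne_zero.mpr ENNReal.ofReal_ne_top
    calc (⊤:ℝ≥0∞) = _ := h1.symm
      _ ≤ _ := Summable.tsum_le_tsum hfinal ENNReal.summable ENNReal.summable
  exact top_le_iff.mp hle
end
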